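/- Every finite-dimensional Banach lattice has the Bishop–Phelps–Bollobás property for positive functionals. -/

import Mathlib

/-- The *Bishop–Phelps–Bollobás property for positive functionals* of a Banach lattice. -/
def BPBppPositive (X : Type*) [NormedAddCommGroup X] [Lattice X] [IsOrderedAddMonoid X]
    [HasSolidNorm X] [NormedSpace ℝ X] : Prop :=
  ∀ ε : ℝ, 0 < ε → ε < 1 → ∃ η : ℝ, 0 < η ∧ η < ε ∧
    ∀ f : X →L[ℝ] ℝ, (∀ z : X, 0 ≤ z → 0 ≤ f z) → ‖f‖ = 1 →
      ∀ x₀ : X, ‖x₀‖ = 1 → 1 - η < f x₀ →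
        ∃ (y : X) (g : X →L[ℝ] ℝ), ‖y‖ = 1 ∧
          (∀ z : X, 0 ≤ z → 0 ≤ g z) ∧ ‖g‖ = 1 ∧
          g y = 1 ∧ ‖y - x₀‖ < ε ∧ ‖g - f‖ < ε

/-- Every finite-dimensional Banach lattice has the Bishop–Phelps–Bollobás
property for positive functionals. -/
theorem stmt5 (X : Type*) [NormedAddCommGroup X] [Lattice X] [IsOrderedAddMonoid X]
    [HasSolidNorm X] [NormedSpace ℝ X]
    [PosSMulStrictMono ℝ X] [FiniteDimensional ℝ X] :
    BPBppPositive X := by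
  unfold BPBppPositive
  intro ε hε hε1
  by_contra hcon
  push_neg at hcon
  set η : ℕ → ℝ := fun n => ε / (2 * (n + 1)) with hηdef
  have hηpos : ∀ n : ℕ, 0 < η n := fun n => by positivity
  have hηlt : ∀ n : ℕ, η n < ε := by
    intro n
    rw [hηdef]
    rw [div_lt_iff₀ (by positivity)]
    nlinarith [hε, (Nat.cast_nonneg n : (0:ℝ) ≤ n)]
  choose f hfpos hfnorm x hxnorm hfx hbad using fun n => hcon (η n) (hηpos n) (hηlt n)
  -- the sequence (f n, x n) lives in a compact set (product of spheres)
  have hs : IsCompact ((Metric.sphere (0 : X →L[ℝ] ℝ) 1) ×ˢ (Metric.sphere (0 : X) 1)) :=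
    (isCompact_sphere 0 1).prod (isCompact_sphere 0 1)
  have hu : ∀ n : ℕ, (f n, x n) ∈ (Metric.sphere (0 : X →L[ℝ] ℝ) 1) ×ˢ (Metric.sphere (0 : X) 1) := by
    intro n
    constructor <;> simp [mem_sphere_zero_iff_norm, hfnorm n, hxnorm n]
  obtain ⟨⟨fl, xl⟩, hmem, φ, hφ, hlim⟩ := hs.tendsto_subseq hu
  have hflim : Filter.Tendsto (fun n => f (φ n)) Filter.atTop (nhds fl) :=
    (continuous_fst.tendsto _).comp hlim
  have hxlim : Filter.Tendsto (fun n => x (φ n)) Filter.atTop (nhds xl) :=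
    (continuous_snd.tendsto _).comp hlim
  have hflnorm : ‖fl‖ = 1 := mem_sphere_zero_iff_norm.mp hmem.1
  have hxlnorm : ‖xl‖ = 1 := mem_sphere_zero_iff_norm.mp hmem.2
  have hflpos : ∀ z : X, 0 ≤ z → 0 ≤ fl z := by
    intro z hz
    have hev : Filter.Tendsto (fun n => f (φ n) z) Filter.atTop (nhds (fl z)) :=
      ((ContinuousLinearMap.apply ℝ ℝ z).continuous.tendsto fl).comp hflim
    exact ge_of_tendsto' hev (fun n => hfpos (φ n) z hz)
  have heval : Filter.Tendsto (fun n => f (φ n) (x (φ n))) Filter.atTop (nhds (fl xl)) := by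
    have : Filter.Tendsto (fun p : (X →L[ℝ] ℝ) × X => p.1 p.2) (nhds (fl, xl)) (nhds (fl xl)) :=
      isBoundedBilinearMap_apply.continuous.tendsto (fl, xl)
    exact this.comp hlim
  have hηto0 : Filter.Tendsto (fun n => η (φ n)) Filter.atTop (nhds 0) := by
    have h1 : Filter.Tendsto (fun n : ℕ => η n) Filter.atTop (nhds 0) := by
      rw [hηdef]
      have h2 : Filter.Tendsto (fun n : ℕ => (ε / 2) * (1 / (n + 1))) Filter.atTop
          (nhds ((ε/2) * 0)) :=
        tendsto_one_div_add_atTop_nhds_zero_nat.const_mul (ε / 2)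
      simpa [div_eq_mul_inv, mul_comm, mul_assoc, mul_left_comm] using h2
    exact h1.comp hφ.tendsto_atTop
  have hge : (1 : ℝ) ≤ fl xl := by
    have h1 : Filter.Tendsto (fun n => 1 - η (φ n)) Filter.atTop (nhds 1) := by
      simpa using (tendsto_const_nhds (x := (1:ℝ))).sub hηto0
    exact le_of_tendsto_of_tendsto' h1 heval (fun n => (hfx (φ n)).le)
  have hle : fl xl ≤ 1 := by
    calc fl xl ≤ ‖fl xl‖ := le_abs_self _
    _ ≤ ‖fl‖ * ‖xl‖ := fl.le_opNorm xl
    _ = 1 := by rw [hflnorm, hxlnorm, one_mul]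
  have hfxl : fl xl = 1 := le_antisymm hle hge
  obtain ⟨N₁, hN₁⟩ := Metric.tendsto_atTop.mp hxlim ε hε
  obtain ⟨N₂, hN₂⟩ := Metric.tendsto_atTop.mp hflim ε hε
  set n := max N₁ N₂
  have h1 : ‖xl - x (φ n)‖ < ε := by
    rw [← dist_eq_norm, dist_comm]
    exact hN₁ n (le_max_left _ _)
  have h2 : ‖fl - f (φ n)‖ < ε := by
    rw [← dist_eq_norm, dist_comm]
    exact hN₂ n (le_max_right _ _)
  exact absurd h2 (not_lt.mpr (hbad (φ n) xl fl hxlnorm hflpos hflnorm hfxl h1))
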